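/- arXiv:1403.4324 — 5 statements merged into one kernel-verified Lean document; each statement's English description precedes it below -/
import Mathlib

section
/- Let Λ be a row-finite locally convex k-graph, let v ∈ Λ^0 and let E ⊆ vΛ be a finite exhaustive set. Set N := ⋁_{λ ∈ E} d(λ). Then {λν : λ ∈ E, ν ∈ s(λ)Λ^{≤N−d(λ)}} = vΛ^{≤N}. -/
open scoped BigOperators NNReal ENNReal

/-- A `k`-graph: a countable small category presented on its set of morphisms,
with a range map, a source map, a (total, junk-valued on non-composable pairs)
composition, and a degree functor into `ℕ^k` satisfying the factorisation
property. -/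
structure KGraph (k : ℕ) where
  M : Type
  countableM : Countable M
  nonemptyM : Nonempty M
  src : M → M
  rng : M → M
  comp : M → M → M
  deg : M → Fin k → ℕ
  src_src : ∀ x, src (src x) = src x
  rng_src : ∀ x, rng (src x) = src x
  src_rng : ∀ x, src (rng x) = rng x
  rng_rng : ∀ x, rng (rng x) = rng x
  comp_id : ∀ x, comp x (src x) = x
  id_comp : ∀ x, comp (rng x) x = x
  src_comp : ∀ x y, src x = rng y → src (comp x y) = src y
  rng_comp : ∀ x y, src x = rng y → rng (comp x y) = rng x
  comp_assoc : ∀ x y z, src x = rng y → src y = rng z →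
    comp (comp x y) z = comp x (comp y z)
  deg_src : ∀ x, deg (src x) = 0
  deg_rng : ∀ x, deg (rng x) = 0
  deg_comp : ∀ x y, src x = rng y → deg (comp x y) = deg x + deg y
  factor : ∀ (x : M) (m n : Fin k → ℕ), deg x = m + n →
    ∃! p : M × M, src p.1 = rng p.2 ∧ comp p.1 p.2 = x ∧ deg p.1 = m ∧ deg p.2 = n

namespace KGraph

variable {k : ℕ} (Λ : KGraph k)

/-- The vertices (identity morphisms) of a `k`-graph. -/
def IsVertex (v : Λ.M) : Prop := Λ.rng v = v

/-- `Composable x y` means the composition `x ∘ y` (i.e. the path `xy`) is defined. -/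
def Composable (x y : Λ.M) : Prop := Λ.src x = Λ.rng y

/-- The type of vertices of `Λ`. -/
def Vtx := {v : Λ.M // Λ.IsVertex v}

theorem isVertex_src (x : Λ.M) : Λ.IsVertex (Λ.src x) := Λ.rng_src x

theorem isVertex_rng (x : Λ.M) : Λ.IsVertex (Λ.rng x) := Λ.rng_rng x

/-- The source of a morphism, as a vertex. -/
def srcV (x : Λ.M) : Λ.Vtx := ⟨Λ.src x, Λ.isVertex_src x⟩

/-- The set `vΛ^{≤ n}`. -/
def leSet (v : Λ.M) (n : Fin k → ℕ) : Set Λ.M :=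
  {x | Λ.rng x = v ∧ Λ.deg x ≤ n ∧
    ∀ i : Fin k, Λ.deg x + Pi.single i 1 ≤ n →
      ¬∃ y, Λ.rng y = Λ.src x ∧ Λ.deg y = Pi.single i 1}

/-- A `k`-graph is row-finite if `vΛ^n` is finite for every vertex `v` and `n ∈ ℕ^k`. -/
def RowFinite : Prop :=
  ∀ (v : Λ.M) (n : Fin k → ℕ), Λ.IsVertex v → {x | Λ.rng x = v ∧ Λ.deg x = n}.Finite

/-- A `k`-graph is locally convex if whenever `i < j`, `e ∈ Λ^{e_i}`, `f ∈ Λ^{e_j}` and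
`r e = r f`, both `e` and `f` extend to paths of degree `e_i + e_j`. -/
def LocallyConvex : Prop :=
  ∀ (i j : Fin k), i < j → ∀ e f : Λ.M,
    Λ.deg e = Pi.single i 1 → Λ.deg f = Pi.single j 1 → Λ.rng e = Λ.rng f →
    (∃ e', Λ.Composable e e' ∧ Λ.deg e' = Pi.single j 1) ∧
    (∃ f', Λ.Composable f f' ∧ Λ.deg f' = Pi.single i 1)

/-- `Λ^{min}(x,y)`: the pairs `(α, β)` with `xα = yβ` of degree `d x ⊔ d y`. -/
def MinExt (x y : Λ.M) : Set (Λ.M × Λ.M) :=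
  {p | Λ.Composable x p.1 ∧ Λ.Composable y p.2 ∧
    Λ.comp x p.1 = Λ.comp y p.2 ∧ Λ.deg (Λ.comp x p.1) = Λ.deg x ⊔ Λ.deg y}

/-- A subset `E ⊆ vΛ` is exhaustive if every `x ∈ vΛ` has a minimal common extension
with some element of `E`. -/
def Exhaustive (v : Λ.M) (E : Set Λ.M) : Prop :=
  ∀ x, Λ.rng x = v → ∃ μ ∈ E, (Λ.MinExt x μ).Nonempty

/-- A graph trace on `Λ`. -/
def IsGraphTrace (g : Λ.Vtx → ℝ≥0) : Prop :=
  ∀ (v : Λ.Vtx) (n : Fin k → ℕ), g v = ∑ᶠ x ∈ Λ.leSet v.1 n, g (Λ.srcV x)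

/-- A `𝕋`-valued `2`-cocycle on `Λ`, presented as a `ℂ`-valued function that is
unimodular on composable pairs. -/
def IsTCocycle (c : Λ.M → Λ.M → ℂ) : Prop :=
  (∀ x y, Λ.Composable x y → ‖c x y‖ = 1) ∧
  (∀ x y, Λ.IsVertex x ∨ Λ.IsVertex y → c x y = 1) ∧
  (∀ x y z, Λ.Composable x y → Λ.Composable y z →
    c x y * c (Λ.comp x y) z = c y z * c x (Λ.comp y z))

/-- A Cuntz–Krieger `(Λ, c)`-family in a `C*`-algebra `B`: relations (CK1)–(CK4). -/
def IsCKFamily {B : Type*} [NonUnitalCStarAlgebra B] [NormedSpace ℂ B]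
    (c : Λ.M → Λ.M → ℂ) (s : Λ.M → B) : Prop :=
  (∀ v, Λ.IsVertex v → star (s v) = s v ∧ s v * s v = s v) ∧
  (∀ v w, Λ.IsVertex v → Λ.IsVertex w → v ≠ w → s v * s w = 0) ∧
  (∀ x y, Λ.Composable x y → s x * s y = c x y • s (Λ.comp x y)) ∧
  (∀ x, star (s x) * s x = s (Λ.src x)) ∧
  (∀ (v : Λ.M) (n : Fin k → ℕ), Λ.IsVertex v →
    s v = ∑ᶠ x ∈ Λ.leSet v n, s x * star (s x))

end KGraph
open KGraph in
/-- In a row-finite locally convex `k`-graph, if `E ⊆ vΛ` is a finite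
exhaustive set and `N := ⋁_{x ∈ E} d x`, then
`{xν : x ∈ E, ν ∈ s(x)Λ^{≤ N − d x}} = vΛ^{≤N}`. -/
theorem exhaustive_extensions_eq_leSet {k : ℕ} (Λ : KGraph k)
    (hrf : Λ.RowFinite) (hlc : Λ.LocallyConvex)
    (v : Λ.M) (hv : Λ.IsVertex v) (E : Finset Λ.M)
    (hE : ↑E ⊆ {x | Λ.rng x = v}) (hex : Λ.Exhaustive v ↑E) :
    {z : Λ.M | ∃ x ∈ E, ∃ ν, Λ.Composable x ν ∧
        ν ∈ Λ.leSet (Λ.src x) (E.sup Λ.deg - Λ.deg x) ∧ z = Λ.comp x ν} =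
      Λ.leSet v (E.sup Λ.deg) := by
  ext z
  constructor
  · rintro ⟨x, hxE, ν, hcomp, ⟨hrν, hνle, hνmax⟩, rfl⟩
    have hxN : Λ.deg x ≤ E.sup Λ.deg := Finset.le_sup hxE
    rw [Pi.le_def] at hxN hνle
    simp only [Pi.sub_apply] at hνle
    have hd : Λ.deg (Λ.comp x ν) = Λ.deg x + Λ.deg ν := Λ.deg_comp x ν hcomp
    refine ⟨?_, ?_, ?_⟩
    · rw [Λ.rng_comp x ν hcomp]; exact hE hxE
    · rw [hd, Pi.le_def]
      intro j
      have h1 := hνle j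
      have h2 := hxN j
      simp only [Pi.add_apply]
      omega
    · intro i hi
      rw [hd, Pi.le_def] at hi
      simp only [Pi.add_apply] at hi
      rw [Λ.src_comp x ν hcomp]
      apply hνmax i
      rw [Pi.le_def]
      intro j
      have h0 := hi j
      have h2 := hxN j
      simp only [Pi.add_apply, Pi.sub_apply]
      omega
  · rintro ⟨hrz, hzle, hzmax⟩
    obtain ⟨μ, hμE, ⟨⟨α, β⟩, hcα, hcβ, heq, hdeq⟩⟩ := hex z hrz
    have hdz : Λ.deg (Λ.comp z α) = Λ.deg z + Λ.deg α := Λ.deg_comp _ _ hcα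
    have hμN : Λ.deg μ ≤ E.sup Λ.deg := Finset.le_sup hμE
    rw [Pi.le_def] at hμN hzle
    have hsum : ∀ j, Λ.deg z j + Λ.deg α j = max (Λ.deg z j) (Λ.deg μ j) := by
      intro j
      have := congrFun (hdz.symm.trans hdeq) j
      simpa [Pi.add_apply, Pi.sup_apply] using this
    have hα0 : Λ.deg α = 0 := by
      by_contra h
      obtain ⟨i, hi⟩ : ∃ i, Λ.deg α i ≠ 0 := by
        by_contra h'; push_neg at h'; exact h (funext fun i => h' i)
      have hfac := Λ.factor α (Pi.single i 1) (Λ.deg α - Pi.single i 1) ?_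
      · obtain ⟨⟨p1, p2⟩, ⟨hp, hpc, hp1, hp2⟩, -⟩ := hfac
        refine hzmax i ?_ ⟨p1, ?_, hp1⟩
        · rw [Pi.le_def]
          intro j
          have h1 := hzle j
          have h2 := hμN j
          have h3 := hsum j
          simp only [Pi.add_apply]
          rcases eq_or_ne j i with rfl | hne
          · simp only [Pi.single_eq_same]; omega
          · simp only [Pi.single_eq_of_ne hne]; omega
        · rw [hcα, ← hpc, Λ.rng_comp p1 p2 hp]
      · funext j
        simp only [Pi.add_apply, Pi.sub_apply]
        rcases eq_or_ne j i with rfl | hne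
        · simp only [Pi.single_eq_same]; omega
        · simp only [Pi.single_eq_of_ne hne]; omega
    have hαid : Λ.rng α = α := by
      obtain ⟨p, -, hup⟩ := Λ.factor α 0 0 (by rw [hα0, add_zero])
      have h1 := hup (Λ.rng α, α)
        ⟨Λ.src_rng α, Λ.id_comp α, Λ.deg_rng α, hα0⟩
      have h2 := hup (α, Λ.src α)
        ⟨(Λ.rng_src α).symm, Λ.comp_id α, hα0, Λ.deg_src α⟩
      have := h1.trans h2.symm
      exact congrArg Prod.fst this
    have hz : z = Λ.comp μ β := by
      have hα : α = Λ.src z := by rw [← hαid, ← hcα]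
      calc z = Λ.comp z (Λ.src z) := (Λ.comp_id z).symm
        _ = Λ.comp z α := by rw [hα]
        _ = Λ.comp μ β := heq
    have hdz2 : ∀ j, Λ.deg z j = Λ.deg μ j + Λ.deg β j := by
      intro j
      have : Λ.deg z = Λ.deg μ + Λ.deg β := by
        rw [hz]; exact Λ.deg_comp μ β hcβ
      have := congrFun this j
      simpa [Pi.add_apply] using this
    refine ⟨μ, hμE, β, hcβ, ⟨hcβ.symm, ?_, ?_⟩, hz⟩
    · rw [Pi.le_def]
      intro j
      have h1 := hzle j
      have h2 := hμN j
      have h3 := hdz2 j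
      simp only [Pi.sub_apply]
      omega
    · intro i hi
      rw [Pi.le_def] at hi
      simp only [Pi.add_apply, Pi.sub_apply] at hi
      have hs : Λ.src β = Λ.src z := by rw [hz, Λ.src_comp μ β hcβ]
      rw [hs]
      apply hzmax i
      rw [Pi.le_def]
      intro j
      have h0 := hi j
      have h2 := hμN j
      have h3 := hdz2 j
      simp only [Pi.add_apply]
      omega
end

section
/- Let Λ = lim(Λ_n, p_n) be the (k+1)-graph associated to a covering sequence of k-graphs and let A be an abelian group. Then the projection π : Λ → Λ_1 is a functor (in particular π(λμ) = π(λ)π(μ) for all composable λ, μ ∈ Λ, and π maps identities to identities), and for every c ∈ Z²(Λ_1, A) the formula π_*c(λ,μ) := c(π(λ), π(μ)) defines an element π_*c ∈ Z²(Λ, A); moreover c ↦ π_*c is a group homomorphism from Z²(Λ_1, A) to Z²(Λ, A). -/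
open scoped BigOperators NNReal ENNReal

attribute [local instance] Classical.propDecidable

namespace KGraph

variable {k : ℕ}

/-- An `A`-valued (categorical) `2`-cocycle on a `k`-graph, encoded as a total
function that vanishes on non-composable pairs and on pairs involving an
identity morphism, and satisfies the cocycle identity on composable triples. -/
def IsCocycle2 (Λ : KGraph k) {A : Type*} [AddCommGroup A] (c : Λ.M → Λ.M → A) : Prop :=
  (∀ x y, ¬Λ.Composable x y → c x y = 0) ∧
  (∀ x y, Λ.IsVertex x ∨ Λ.IsVertex y → c x y = 0) ∧
  (∀ x y z, Λ.Composable x y → Λ.Composable y z →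
    c x y + c (Λ.comp x y) z = c y z + c x (Λ.comp y z))

/-- The group `Z²(Λ, A)` of `A`-valued `2`-cocycles on `Λ`. -/
def Z2 (Λ : KGraph k) (A : Type*) [AddCommGroup A] : AddSubgroup (Λ.M → Λ.M → A) where
  carrier := {c | Λ.IsCocycle2 c}
  zero_mem' := by
    refine ⟨fun _ _ _ => rfl, fun _ _ _ => rfl, fun _ _ _ _ _ => rfl⟩
  add_mem' := by
    rintro c d ⟨hc1, hc2, hc3⟩ ⟨hd1, hd2, hd3⟩
    refine ⟨fun x y h => ?_, fun x y h => ?_, fun x y z h1 h2 => ?_⟩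
    · simp [hc1 x y h, hd1 x y h]
    · simp [hc2 x y h, hd2 x y h]
    · simp only [Pi.add_apply]
      rw [add_add_add_comm, hc3 x y z h1 h2, hd3 x y z h1 h2, add_add_add_comm]
  neg_mem' := by
    rintro c ⟨hc1, hc2, hc3⟩
    refine ⟨fun x y h => ?_, fun x y h => ?_, fun x y z h1 h2 => ?_⟩
    · simp [hc1 x y h]
    · simp [hc2 x y h]
    · simp only [Pi.neg_apply]
      rw [← neg_add, ← neg_add, hc3 x y z h1 h2]

/-- A `1`-cochain: a function on morphisms vanishing on the identity morphisms. -/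
def IsCochain1 (Λ : KGraph k) {A : Type*} [AddCommGroup A] (b : Λ.M → A) : Prop :=
  ∀ v, Λ.IsVertex v → b v = 0

/-- The coboundary `δ¹ b` of a `1`-cochain `b`. -/
noncomputable def delta1 (Λ : KGraph k) {A : Type*} [AddCommGroup A] (b : Λ.M → A) :
    Λ.M → Λ.M → A :=
  fun x y => if Λ.Composable x y then b x + b y - b (Λ.comp x y) else 0

/-- The group `B²(Λ, A)` of `A`-valued `2`-coboundaries on `Λ`. -/
noncomputable def B2 (Λ : KGraph k) (A : Type*) [AddCommGroup A] :
    AddSubgroup (Λ.M → Λ.M → A) where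
  carrier := {c | ∃ b, Λ.IsCochain1 b ∧ c = Λ.delta1 b}
  zero_mem' := ⟨0, fun _ _ => rfl, by
    funext x y
    simp [delta1]⟩
  add_mem' := by
    rintro c d ⟨b, hb, rfl⟩ ⟨b', hb', rfl⟩
    refine ⟨b + b', fun v hv => by simp [hb v hv, hb' v hv], ?_⟩
    funext x y
    simp only [Pi.add_apply, delta1]
    split <;> [abel; simp]
  neg_mem' := by
    rintro c ⟨b, hb, rfl⟩
    refine ⟨-b, fun v hv => by simp [hb v hv], ?_⟩
    funext x y
    simp only [Pi.neg_apply, delta1]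
    split <;> [abel; simp]

/-- The second (categorical) cohomology group `H²(Λ, A) = Z²(Λ,A)/B²(Λ,A)`. -/
noncomputable def H2 (Λ : KGraph k) (A : Type*) [AddCommGroup A] :=
  Z2 Λ A ⧸ (B2 Λ A).addSubgroupOf (Z2 Λ A)

noncomputable instance (Λ : KGraph k) (A : Type*) [AddCommGroup A] :
    AddCommGroup (H2 Λ A) := by
  unfold H2; infer_instance

/-- A covering of `k`-graphs: a surjective degree-preserving functor that restricts to
bijections `Γv → Λ p(v)` and `vΓ → p(v)Λ` on every vertex `v`. -/
def IsKGraphCovering (Γ Λ : KGraph k) (p : Γ.M → Λ.M) : Prop :=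
  Function.Surjective p ∧
  (∀ x, Λ.src (p x) = p (Γ.src x)) ∧
  (∀ x, Λ.rng (p x) = p (Γ.rng x)) ∧
  (∀ x, Λ.deg (p x) = Γ.deg x) ∧
  (∀ x y, Γ.Composable x y → p (Γ.comp x y) = Λ.comp (p x) (p y)) ∧
  (∀ v, Γ.IsVertex v → Set.BijOn p {x | Γ.src x = v} {y | Λ.src y = p v}) ∧
  (∀ v, Γ.IsVertex v → Set.BijOn p {x | Γ.rng x = v} {y | Λ.rng y = p v})

end KGraph

open KGraph

/-- The `(k+1)`-graph `Λ = lim (Λ_n, p_n)` associated to a covering sequence of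
`k`-graphs, together with all its defining data: `L n` is the `k`-graph `Λ_{n+1}`
(so `L 0 = Λ₁`), `p n : Λ_{n+2} → Λ_{n+1}` are the coverings, `Lam` is the limit
`(k+1)`-graph, `ι n : Λ_{n+1} → Λ` are the injective functors, and `edge` is the
bijection of `⨆_{n ≥ 2} Λ_n^0` onto `Λ^{e_{k+1}}`, subject to the characterising
properties (1)–(5). -/
structure CovSeqLimit (k : ℕ) where
  L : ℕ → KGraph k
  p : ∀ n, (L (n + 1)).M → (L n).M
  p_cov : ∀ n, IsKGraphCovering (L (n + 1)) (L n) (p n)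
  Lam : KGraph (k + 1)
  ι : ∀ n, (L n).M → Lam.M
  ι_inj : ∀ n, Function.Injective (ι n)
  ι_src : ∀ n x, Lam.src (ι n x) = ι n ((L n).src x)
  ι_rng : ∀ n x, Lam.rng (ι n x) = ι n ((L n).rng x)
  ι_comp : ∀ n x y, (L n).Composable x y →
    Lam.comp (ι n x) (ι n y) = ι n ((L n).comp x y)
  ι_deg : ∀ n x, Lam.deg (ι n x) = Fin.snoc ((L n).deg x) 0
  ι_disjoint : ∀ m n x y, ι m x = ι n y → m = n
  ι_union : ∀ z : Lam.M, Lam.deg z (Fin.last k) = 0 → ∃ n x, ι n x = z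
  edge : (Σ n : ℕ, (L (n + 1)).M) → Lam.M
  edge_deg : ∀ q : Σ n, (L (n + 1)).M, (L (q.1 + 1)).IsVertex q.2 →
    Lam.deg (edge q) = Fin.snoc (fun _ : Fin k => 0) 1
  edge_injOn : Set.InjOn edge {q | (L (q.1 + 1)).IsVertex q.2}
  edge_surj : ∀ z : Lam.M, Lam.deg z = Fin.snoc (fun _ : Fin k => 0) 1 →
    ∃ q, (L (q.1 + 1)).IsVertex q.2 ∧ edge q = z
  edge_src : ∀ (n) (v : (L (n + 1)).M), (L (n + 1)).IsVertex v →
    Lam.src (edge ⟨n, v⟩) = ι (n + 1) v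
  edge_rng : ∀ (n) (v : (L (n + 1)).M), (L (n + 1)).IsVertex v →
    Lam.rng (edge ⟨n, v⟩) = ι n (p n v)
  edge_comm : ∀ (n) (x : (L (n + 1)).M),
    Lam.comp (edge ⟨n, (L (n + 1)).rng x⟩) (ι (n + 1) x) =
      Lam.comp (ι n (p n x)) (edge ⟨n, (L (n + 1)).src x⟩)

namespace CovSeqLimit

variable {k : ℕ} (C : CovSeqLimit k)

/-- The iterated covering maps `p_{1,n} : Λ_n → Λ_1`. -/
def pIter : ∀ n, (C.L n).M → (C.L 0).M
  | 0 => id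
  | n + 1 => pIter n ∘ C.p n

/-- A degree `d ∈ ℕ^{k+1}` lies in `ℕ e_{k+1}` iff its first `k` coordinates vanish. -/
def OnlyLast {k : ℕ} (d : Fin (k + 1) → ℕ) : Prop :=
  ∀ i : Fin k, d i.castSucc = 0

/-- The hypothesis that `ξ` assigns to each vertex `v` of `Λ` the path
`ξ_v ∈ Λ_1^0 Λ^{ℕ e_{k+1}} v`. -/
def IsXi (ξ : C.Lam.M → C.Lam.M) : Prop :=
  ∀ v, C.Lam.IsVertex v → C.Lam.src (ξ v) = v ∧ OnlyLast (C.Lam.deg (ξ v)) ∧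
    ∃ w, (C.L 0).IsVertex w ∧ C.Lam.rng (ξ v) = C.ι 0 w

/-- The hypothesis that `π : Λ → Λ₁` is the projection determined by the unique
factorisation `ξ_{r λ} λ = π(λ) β` with `π(λ) ∈ Λ₁` and `β ∈ Λ^{ℕ e_{k+1}}`. -/
def IsProjOnto (ξ : C.Lam.M → C.Lam.M) (π : C.Lam.M → (C.L 0).M) : Prop :=
  ∀ x, ∃ β, OnlyLast (C.Lam.deg β) ∧ C.Lam.Composable (C.ι 0 (π x)) β ∧
    C.Lam.comp (ξ (C.Lam.rng x)) x = C.Lam.comp (C.ι 0 (π x)) β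

/-- The map `π_* : Z²(Λ₁, A) → Z²(Λ, A)`, `π_* c (λ, μ) = c(π λ, π μ)`. -/
noncomputable def pfwd {A : Type*} [AddCommGroup A] (π : C.Lam.M → (C.L 0).M)
    (c : (C.L 0).M → (C.L 0).M → A) : C.Lam.M → C.Lam.M → A :=
  fun x y => if C.Lam.Composable x y then c (π x) (π y) else 0

/-- The restriction map `Z²(Λ, A) → Z²(Λ₁, A)`, `c ↦ c|_{Λ₁}`. -/
def res {A : Type*} [AddCommGroup A] (c : C.Lam.M → C.Lam.M → A) :
    (C.L 0).M → (C.L 0).M → A :=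
  fun x y => c (C.ι 0 x) (C.ι 0 y)

end CovSeqLimit

section AuxProofs

open KGraph CovSeqLimit

variable {k : ℕ}

theorem KGraph.isVertex_of_deg_zero (Λ : KGraph k) {x : Λ.M} (h : Λ.deg x = 0) :
    Λ.IsVertex x := by
  obtain ⟨p, hp, hu⟩ := Λ.factor x 0 0 (by simpa using h)
  have h1 : ((Λ.rng x, x) : Λ.M × Λ.M) = p :=
    hu _ ⟨Λ.src_rng x, Λ.id_comp x, Λ.deg_rng x, h⟩
  have h2 : ((x, Λ.src x) : Λ.M × Λ.M) = p :=
    hu _ ⟨(Λ.rng_src x).symm, Λ.comp_id x, h, Λ.deg_src x⟩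
  exact (Prod.ext_iff.mp (h1.trans h2.symm)).1

theorem KGraph.src_of_isVertex (Λ : KGraph k) {v : Λ.M} (hv : Λ.IsVertex v) :
    Λ.src v = v := by
  conv_lhs => rw [← hv]
  rw [Λ.src_rng, hv]

namespace CovSeqLimit

variable (C : CovSeqLimit k)

theorem onlyLast_zero_deg {β : C.Lam.M} (h1 : OnlyLast (C.Lam.deg β))
    (h2 : C.Lam.deg β (Fin.last k) = 0) : C.Lam.deg β = 0 := by
  funext i
  refine Fin.lastCases ?_ ?_ i
  · simpa using h2
  · intro j; simpa using h1 j

theorem edge_factor {β : C.Lam.M} {m : ℕ} (h1 : OnlyLast (C.Lam.deg β))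
    (h2 : C.Lam.deg β (Fin.last k) = m + 1) :
    ∃ (β₁ : C.Lam.M) (n : ℕ) (w : (C.L (n + 1)).M),
      (C.L (n + 1)).IsVertex w ∧
      C.Lam.Composable β₁ (C.edge ⟨n, w⟩) ∧
      β = C.Lam.comp β₁ (C.edge ⟨n, w⟩) ∧
      C.Lam.src β = C.ι (n + 1) w ∧
      C.Lam.rng β₁ = C.Lam.rng β ∧
      OnlyLast (C.Lam.deg β₁) ∧
      C.Lam.deg β₁ (Fin.last k) = m := by
  have hd : C.Lam.deg β =
      Fin.snoc (fun _ : Fin k => 0) m + Fin.snoc (fun _ : Fin k => 0) 1 := by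
    funext i
    refine Fin.lastCases ?_ ?_ i
    · simp [h2]
    · intro j; simp [h1 j]
  obtain ⟨p, ⟨hse, hcomp, hdm, hdn⟩, -⟩ := C.Lam.factor β _ _ hd
  obtain ⟨q, hq, hqe⟩ := C.edge_surj p.2 hdn
  obtain ⟨n, w⟩ := q
  refine ⟨p.1, n, w, hq, ?_, ?_, ?_, ?_, ?_, ?_⟩
  · show C.Lam.src p.1 = C.Lam.rng (C.edge ⟨n, w⟩)
    rw [hqe]; exact hse
  · rw [hqe]; exact hcomp.symm
  · rw [← hcomp, C.Lam.src_comp _ _ hse, ← hqe, C.edge_src n w hq]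
  · rw [← hcomp, C.Lam.rng_comp _ _ hse]
  · intro j; rw [hdm]; simp
  · rw [hdm]; simp

theorem xi_unique : ∀ (m : ℕ) (β β' : C.Lam.M), OnlyLast (C.Lam.deg β) →
    OnlyLast (C.Lam.deg β') →
    C.Lam.deg β (Fin.last k) = m →
    C.Lam.src β = C.Lam.src β' →
    (∃ u, (C.L 0).IsVertex u ∧ C.Lam.rng β = C.ι 0 u) →
    (∃ u, (C.L 0).IsVertex u ∧ C.Lam.rng β' = C.ι 0 u) → β = β' := by
  intro m
  induction m with
  | zero =>
    rintro β β' h1 h2 h3 h4 ⟨u, hu, hru⟩ ⟨u', hu', hru'⟩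
    have hvβ : C.Lam.IsVertex β := C.Lam.isVertex_of_deg_zero (C.onlyLast_zero_deg h1 h3)
    rcases Nat.eq_zero_or_pos (C.Lam.deg β' (Fin.last k)) with h0 | h0
    · have hvβ' : C.Lam.IsVertex β' :=
        C.Lam.isVertex_of_deg_zero (C.onlyLast_zero_deg h2 h0)
      calc β = C.Lam.src β := (C.Lam.src_of_isVertex hvβ).symm
        _ = C.Lam.src β' := h4
        _ = β' := C.Lam.src_of_isVertex hvβ'
    · exfalso
      obtain ⟨m', hm'⟩ := Nat.exists_eq_succ_of_ne_zero (Nat.pos_iff_ne_zero.mp h0)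
      obtain ⟨β₁', n, w, hq, hc', hβeq', hsrc', hrng', hol', hdl'⟩ := C.edge_factor h2 hm'
      have : C.ι 0 u = C.ι (n + 1) w := by
        rw [← hru, hvβ, ← C.Lam.src_of_isVertex hvβ, h4, hsrc']
      exact Nat.succ_ne_zero n (C.ι_disjoint _ _ _ _ this).symm
  | succ m ih =>
    rintro β β' h1 h2 h3 h4 ⟨u, hu, hru⟩ hβ'
    obtain ⟨β₁, n, w, hq, hc, hβeq, hsrc, hrng, hol, hdl⟩ := C.edge_factor h1 h3
    rcases Nat.eq_zero_or_pos (C.Lam.deg β' (Fin.last k)) with h0 | h0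
    · exfalso
      obtain ⟨u', hu', hru'⟩ := hβ'
      have hvβ' : C.Lam.IsVertex β' :=
        C.Lam.isVertex_of_deg_zero (C.onlyLast_zero_deg h2 h0)
      have : C.ι 0 u' = C.ι (n + 1) w := by
        rw [← hru', hvβ', ← C.Lam.src_of_isVertex hvβ', ← h4, hsrc]
      exact Nat.succ_ne_zero n (C.ι_disjoint _ _ _ _ this).symm
    · obtain ⟨m'', hm''⟩ := Nat.exists_eq_succ_of_ne_zero (Nat.pos_iff_ne_zero.mp h0)
      obtain ⟨β₁', n', w', hq', hc', hβeq', hsrc', hrng', hol', hdl'⟩ :=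
        C.edge_factor h2 hm''
      have hιeq : C.ι (n + 1) w = C.ι (n' + 1) w' := by rw [← hsrc, h4, hsrc']
      have hnn : n = n' := Nat.succ_injective (C.ι_disjoint _ _ _ _ hιeq)
      subst hnn
      have hww : w = w' := C.ι_inj _ hιeq
      subst hww
      have hcE : C.Lam.src β₁ = C.Lam.rng (C.edge ⟨n, w⟩) := hc
      have hcE' : C.Lam.src β₁' = C.Lam.rng (C.edge ⟨n, w⟩) := hc'
      have hβ₁ : β₁ = β₁' := by
        refine ih β₁ β₁' hol hol' hdl (hcE.trans hcE'.symm) ⟨u, hu, ?_⟩ ?_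
        · rw [hrng, hru]
        · obtain ⟨u', hu', hru'⟩ := hβ'
          exact ⟨u', hu', by rw [hrng', hru']⟩
      rw [hβeq, hβeq', hβ₁]

variable (ξ : C.Lam.M → C.Lam.M) (π : C.Lam.M → (C.L 0).M)

theorem deg_pi (hξ : C.IsXi ξ) (hπ : C.IsProjOnto ξ π) (x : C.Lam.M) (i : Fin k) :
    (C.L 0).deg (π x) i = C.Lam.deg x i.castSucc := by
  obtain ⟨β, hol, hcomp, heq⟩ := hπ x
  obtain ⟨hsξ, holξ, -⟩ := hξ _ (C.Lam.isVertex_rng x)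
  have hcx : C.Lam.Composable (ξ (C.Lam.rng x)) x := hsξ
  have e : (C.Lam.deg (ξ (C.Lam.rng x)) + C.Lam.deg x) i.castSucc
      = (C.Lam.deg (C.ι 0 (π x)) + C.Lam.deg β) i.castSucc := by
    rw [← C.Lam.deg_comp _ _ hcx, ← C.Lam.deg_comp _ _ hcomp, heq]
  simp only [Pi.add_apply, holξ i, hol i, C.ι_deg, Fin.snoc_castSucc] at e
  omega

theorem proj_vertex (hξ : C.IsXi ξ) (hπ : C.IsProjOnto ξ π) {v : C.Lam.M}
    (hv : C.Lam.IsVertex v) : (C.L 0).IsVertex (π v) := by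
  apply (C.L 0).isVertex_of_deg_zero
  have hdv : C.Lam.deg v = 0 := by rw [← hv]; exact C.Lam.deg_rng v
  funext i
  rw [C.deg_pi ξ π hξ hπ v i, hdv]
  simp

theorem proj_comp (hξ : C.IsXi ξ) (hπ : C.IsProjOnto ξ π) (x y : C.Lam.M)
    (hxy : C.Lam.Composable x y) :
    (C.L 0).Composable (π x) (π y) ∧
      π (C.Lam.comp x y) = (C.L 0).comp (π x) (π y) := by
  obtain ⟨β, holβ, hcβ, heqx⟩ := hπ x
  obtain ⟨γ, holγ, hcγ, heqy⟩ := hπ y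
  obtain ⟨δ, holδ, hcδ, heqxy⟩ := hπ (C.Lam.comp x y)
  obtain ⟨hsξx, holξx, wx, hwx, hrξx⟩ := hξ _ (C.Lam.isVertex_rng x)
  obtain ⟨hsξy, holξy, wy, hwy, hrξy⟩ := hξ _ (C.Lam.isVertex_rng y)
  have hcξx : C.Lam.Composable (ξ (C.Lam.rng x)) x := hsξx
  have hcξy : C.Lam.Composable (ξ (C.Lam.rng y)) y := hsξy
  have hcβ' : C.Lam.src (C.ι 0 (π x)) = C.Lam.rng β := hcβ
  have hcγ' : C.Lam.src (C.ι 0 (π y)) = C.Lam.rng γ := hcγ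
  have hcδ' : C.Lam.src (C.ι 0 (π (C.Lam.comp x y))) = C.Lam.rng δ := hcδ
  have hrxy : C.Lam.rng (C.Lam.comp x y) = C.Lam.rng x := C.Lam.rng_comp x y hxy
  have hsβ : C.Lam.src β = C.Lam.rng y := by
    have h1 : C.Lam.src (C.Lam.comp (ξ (C.Lam.rng x)) x) = C.Lam.src x :=
      C.Lam.src_comp _ _ hcξx
    rw [heqx, C.Lam.src_comp _ _ hcβ] at h1
    rw [h1]; exact hxy
  have hβξ : β = ξ (C.Lam.rng y) := by
    refine C.xi_unique (C.Lam.deg β (Fin.last k)) _ _ holβ holξy rfl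
      (hsβ.trans hsξy.symm) ?_ ⟨wy, hwy, hrξy⟩
    exact ⟨(C.L 0).src (π x), (C.L 0).isVertex_src _,
      hcβ'.symm.trans (C.ι_src 0 (π x))⟩
  have hcβy : C.Lam.Composable β y := hsβ
  have chain1 : C.Lam.comp (ξ (C.Lam.rng x)) (C.Lam.comp x y)
      = C.Lam.comp (C.ι 0 (π x)) (C.Lam.comp β y) := by
    rw [← C.Lam.comp_assoc (ξ (C.Lam.rng x)) x y hcξx hxy, heqx,
      C.Lam.comp_assoc _ _ _ hcβ hcβy]
  have chain2 : C.Lam.comp β y = C.Lam.comp (C.ι 0 (π y)) γ := by rw [hβξ, heqy]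
  have hcc : C.Lam.src (C.ι 0 (π x)) = C.Lam.rng (C.ι 0 (π y)) := by
    have h1 : C.Lam.rng (C.Lam.comp (C.ι 0 (π y)) γ) = C.Lam.rng (C.ι 0 (π y)) :=
      C.Lam.rng_comp _ _ hcγ
    have h2 : C.Lam.rng (C.Lam.comp β y) = C.Lam.rng β := C.Lam.rng_comp _ _ hcβy
    rw [hcβ', ← h2, chain2, h1]
  have hcompL : (C.L 0).Composable (π x) (π y) := by
    show (C.L 0).src (π x) = (C.L 0).rng (π y)
    apply C.ι_inj 0
    rw [← C.ι_src, ← C.ι_rng]; exact hcc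
  refine ⟨hcompL, ?_⟩
  have chain3 : C.Lam.comp (ξ (C.Lam.rng (C.Lam.comp x y))) (C.Lam.comp x y)
      = C.Lam.comp (C.ι 0 ((C.L 0).comp (π x) (π y))) γ := by
    rw [hrxy, chain1, chain2, ← C.Lam.comp_assoc _ _ _ hcc hcγ,
      C.ι_comp 0 _ _ hcompL]
  have hdeq : (C.L 0).deg ((C.L 0).comp (π x) (π y)) = (C.L 0).deg (π (C.Lam.comp x y)) := by
    funext i
    simp only [(C.L 0).deg_comp _ _ hcompL, C.Lam.deg_comp _ _ hxy, Pi.add_apply,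
      C.deg_pi ξ π hξ hπ]
  have hιdeq : C.Lam.deg (C.ι 0 ((C.L 0).comp (π x) (π y)))
      = C.Lam.deg (C.ι 0 (π (C.Lam.comp x y))) := by
    rw [C.ι_deg, C.ι_deg, hdeq]
  have hsγ : C.Lam.src (C.ι 0 ((C.L 0).comp (π x) (π y))) = C.Lam.rng γ := by
    rw [C.ι_src, (C.L 0).src_comp _ _ hcompL, ← C.ι_src]; exact hcγ'
  have hdw : C.Lam.deg (C.Lam.comp (ξ (C.Lam.rng (C.Lam.comp x y))) (C.Lam.comp x y))
      = C.Lam.deg (C.ι 0 (π (C.Lam.comp x y))) + C.Lam.deg δ := by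
    rw [heqxy, C.Lam.deg_comp _ _ hcδ]
  have hdw2 : C.Lam.deg (C.Lam.comp (ξ (C.Lam.rng (C.Lam.comp x y))) (C.Lam.comp x y))
      = C.Lam.deg (C.ι 0 (π (C.Lam.comp x y))) + C.Lam.deg γ := by
    rw [chain3, C.Lam.deg_comp _ _ hsγ, hιdeq]
  have hγδ : C.Lam.deg γ = C.Lam.deg δ := add_left_cancel (hdw2.symm.trans hdw)
  obtain ⟨p, -, hup⟩ := C.Lam.factor _ _ _ hdw
  have e1 : ((C.ι 0 (π (C.Lam.comp x y)), δ) : _ × _) = p :=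
    hup _ ⟨hcδ', heqxy.symm, rfl, rfl⟩
  have e2 : ((C.ι 0 ((C.L 0).comp (π x) (π y)), γ) : _ × _) = p :=
    hup _ ⟨hsγ, chain3.symm, hιdeq, hγδ⟩
  exact C.ι_inj 0 (Prod.ext_iff.mp (e1.trans e2.symm)).1

end CovSeqLimit

end AuxProofs


open KGraph in
/-- For the `(k+1)`-graph `Λ = lim (Λ_n, p_n)` of a covering sequence,
the projection `π : Λ → Λ₁` is a functor, and `π_* c (λ,μ) = c (π λ, π μ)` defines a
group homomorphism `π_* : Z²(Λ₁, A) → Z²(Λ, A)`. -/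
theorem proj_functor_and_pfwd_hom {k : ℕ} (C : CovSeqLimit k)
    (A : Type*) [AddCommGroup A]
    (ξ : C.Lam.M → C.Lam.M) (hξ : C.IsXi ξ)
    (π : C.Lam.M → (C.L 0).M) (hπ : C.IsProjOnto ξ π) :
    (∀ x y, C.Lam.Composable x y →
      (C.L 0).Composable (π x) (π y) ∧
        π (C.Lam.comp x y) = (C.L 0).comp (π x) (π y)) ∧
    (∀ v, C.Lam.IsVertex v → (C.L 0).IsVertex (π v)) ∧
    (∀ c ∈ Z2 (C.L 0) A, C.pfwd π c ∈ Z2 C.Lam A) ∧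
    (∀ c c' : (C.L 0).M → (C.L 0).M → A,
      C.pfwd π (c + c') = C.pfwd π c + C.pfwd π c') := by
  
  refine ⟨fun x y hxy => C.proj_comp ξ π hξ hπ x y hxy,
    fun v hv => C.proj_vertex ξ π hξ hπ hv, ?_, ?_⟩
  · intro c hc
    have hc' : (C.L 0).IsCocycle2 c := hc
    obtain ⟨hc1, hc2, hc3⟩ := hc'
    show C.Lam.IsCocycle2 (C.pfwd π c)
    refine ⟨fun x y h => ?_, fun x y h => ?_, fun x y z h1 h2 => ?_⟩
    · simp only [CovSeqLimit.pfwd]; rw [if_neg h]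
    · by_cases hcomp : C.Lam.Composable x y
      · simp only [CovSeqLimit.pfwd]; rw [if_pos hcomp]
        rcases h with h | h
        · exact hc2 _ _ (Or.inl (C.proj_vertex ξ π hξ hπ h))
        · exact hc2 _ _ (Or.inr (C.proj_vertex ξ π hξ hπ h))
      · simp only [CovSeqLimit.pfwd]; rw [if_neg hcomp]
    · have h12 : C.Lam.Composable (C.Lam.comp x y) z := by
        show C.Lam.src (C.Lam.comp x y) = C.Lam.rng z
        rw [C.Lam.src_comp _ _ h1]; exact h2
      have h23 : C.Lam.Composable x (C.Lam.comp y z) := by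
        show C.Lam.src x = C.Lam.rng (C.Lam.comp y z)
        rw [C.Lam.rng_comp _ _ h2]; exact h1
      obtain ⟨hcxy, hpxy⟩ := C.proj_comp ξ π hξ hπ x y h1
      obtain ⟨hcyz, hpyz⟩ := C.proj_comp ξ π hξ hπ y z h2
      simp only [CovSeqLimit.pfwd]
      rw [if_pos h1, if_pos h2, if_pos h12, if_pos h23, hpxy, hpyz]
      exact hc3 _ _ _ hcxy hcyz
  · intro c c'
    funext x y
    by_cases h : C.Lam.Composable x y <;>
      simp [CovSeqLimit.pfwd, h]
end

section
/- Let Λ = lim(Λ_n, p_n) be the (k+1)-graph associated to a covering sequence of k-graphs, let A be an abelian group, and let c' ∈ Z²(Λ, A) satisfy c'(λ,μ) = 0 whenever λ ∈ Λ^{ℕe_{k+1}} or μ ∈ Λ^{ℕe_{k+1}}. Then for every n ≥ 1, all composable λ, μ ∈ Λ_n, and all α, β ∈ Λ^{ℕe_{k+1}} with s(α) = r(λ) and r(β) = s(μ), one has c'(αλ, μβ) = c'(λ,μ). -/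
open scoped BigOperators NNReal ENNReal

attribute [local instance] Classical.propDecidable

open KGraph

open KGraph in
/-- If `c' ∈ Z²(Λ, A)` vanishes whenever either argument lies in
`Λ^{ℕ e_{k+1}}`, then `c'(αλ, μβ) = c'(λ, μ)` for all composable `λ, μ ∈ Λ_n` and all
`α, β ∈ Λ^{ℕ e_{k+1}}` with `s α = r λ` and `r β = s μ`. -/
theorem cocycle_invariant_under_vertical_translation {k : ℕ} (C : CovSeqLimit k)
    (A : Type*) [AddCommGroup A]
    (c' : C.Lam.M → C.Lam.M → A) (hc' : c' ∈ Z2 C.Lam A)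
    (hvanish : ∀ x y : C.Lam.M,
      CovSeqLimit.OnlyLast (C.Lam.deg x) ∨ CovSeqLimit.OnlyLast (C.Lam.deg y) →
        c' x y = 0) :
    ∀ (n : ℕ) (x y : (C.L n).M), (C.L n).Composable x y →
      ∀ α β : C.Lam.M,
        CovSeqLimit.OnlyLast (C.Lam.deg α) → CovSeqLimit.OnlyLast (C.Lam.deg β) →
        C.Lam.src α = C.Lam.rng (C.ι n x) → C.Lam.rng β = C.Lam.src (C.ι n y) →
        c' (C.Lam.comp α (C.ι n x)) (C.Lam.comp (C.ι n y) β) =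
          c' (C.ι n x) (C.ι n y) := by
  obtain ⟨-, -, h3⟩ := hc'
  intro n x y hxy α β hα hβ hα' hβ'
  set lx := C.ι n x
  set ly := C.ι n y
  have hlm : C.Lam.Composable lx ly := by
    show C.Lam.src lx = C.Lam.rng ly
    rw [C.ι_src, C.ι_rng]; exact congrArg _ hxy
  have hmb : C.Lam.Composable ly β := hβ'.symm
  have e1 : c' lx (C.Lam.comp ly β) = c' lx ly := by
    have := h3 lx ly β hlm hmb
    rw [hvanish _ _ (Or.inr hβ), hvanish _ _ (Or.inr hβ), add_zero, zero_add] at this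
    exact this.symm
  have hal : C.Lam.Composable α lx := hα'
  have hlmb : C.Lam.Composable lx (C.Lam.comp ly β) := by
    show C.Lam.src lx = _
    rw [C.Lam.rng_comp ly β hmb]; exact hlm
  have := h3 α lx (C.Lam.comp ly β) hal hlmb
  rw [hvanish _ _ (Or.inl hα), hvanish _ _ (Or.inl hα), zero_add, add_zero] at this
  rw [this, e1]
end

section
/- Let Λ = lim(Λ_n, p_n) be the (k+1)-graph associated to a covering sequence of k-graphs, let A be an abelian group, and let c' ∈ Z²(Λ, A) satisfy c'(λ,μ) = 0 whenever λ ∈ Λ^{ℕe_{k+1}} or μ ∈ Λ^{ℕe_{k+1}}. Then for every n ≥ 1 and all composable λ, μ ∈ Λ_{n+1}, one has c'(λ,μ) = c'(p_n(λ), p_n(μ)). -/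
open scoped BigOperators NNReal ENNReal

attribute [local instance] Classical.propDecidable

open KGraph

open KGraph in
/-- If `c' ∈ Z²(Λ, A)` vanishes whenever either argument lies in
`Λ^{ℕ e_{k+1}}`, then `c'(λ, μ) = c'(p_n λ, p_n μ)` for all composable
`λ, μ ∈ Λ_{n+1}`. -/
theorem cocycle_descends_along_coverings {k : ℕ} (C : CovSeqLimit k)
    (A : Type*) [AddCommGroup A]
    (c' : C.Lam.M → C.Lam.M → A) (hc' : c' ∈ Z2 C.Lam A)
    (hvanish : ∀ x y : C.Lam.M,
      CovSeqLimit.OnlyLast (C.Lam.deg x) ∨ CovSeqLimit.OnlyLast (C.Lam.deg y) →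
        c' x y = 0) :
    ∀ (n : ℕ) (x y : (C.L (n + 1)).M), (C.L (n + 1)).Composable x y →
      c' (C.ι (n + 1) x) (C.ι (n + 1) y) =
        c' (C.ι n (C.p n x)) (C.ι n (C.p n y)) := by
  obtain ⟨-, -, h3⟩ := hc'
  intro n x y hxy
  obtain ⟨-, hpsrc, hprng, -, -, -, -⟩ := C.p_cov n
  -- vertices
  have hv_rx : (C.L (n+1)).IsVertex ((C.L (n+1)).rng x) := (C.L (n+1)).rng_rng x
  have hv_sx : (C.L (n+1)).IsVertex ((C.L (n+1)).src x) := (C.L (n+1)).isVertex_src x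
  have hv_sy : (C.L (n+1)).IsVertex ((C.L (n+1)).src y) := (C.L (n+1)).isVertex_src y
  -- edges have degree in ℕ e_{k+1}
  have hOL : ∀ v : (C.L (n+1)).M, (C.L (n+1)).IsVertex v →
      CovSeqLimit.OnlyLast (C.Lam.deg (C.edge ⟨n, v⟩)) := by
    intro v hv i
    rw [C.edge_deg ⟨n, v⟩ hv]
    simp [Fin.snoc_castSucc]
  -- abbreviations
  set e := C.edge ⟨n, (C.L (n+1)).rng x⟩ with he
  set f := C.edge ⟨n, (C.L (n+1)).src x⟩ with hf
  set g := C.edge ⟨n, (C.L (n+1)).src y⟩ with hg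
  -- composability facts
  have hc1 : C.Lam.Composable e (C.ι (n+1) x) := by
    show C.Lam.src e = _
    rw [C.edge_src n _ hv_rx, C.ι_rng]
  have hc2 : C.Lam.Composable (C.ι (n+1) x) (C.ι (n+1) y) := by
    show C.Lam.src _ = C.Lam.rng _
    rw [C.ι_src, C.ι_rng, hxy]
  have hc3 : C.Lam.Composable (C.ι n (C.p n x)) f := by
    show C.Lam.src _ = C.Lam.rng f
    rw [C.ι_src, C.edge_rng n _ hv_sx, hpsrc]
  have hc4 : C.Lam.Composable f (C.ι (n+1) y) := by
    show C.Lam.src f = C.Lam.rng _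
    rw [C.edge_src n _ hv_sx, C.ι_rng, hxy]
  have hc5 : C.Lam.Composable (C.ι n (C.p n x)) (C.ι n (C.p n y)) := by
    show C.Lam.src _ = C.Lam.rng _
    rw [C.ι_src, C.ι_rng, hpsrc, hprng, hxy]
  have hc6 : C.Lam.Composable (C.ι n (C.p n y)) g := by
    show C.Lam.src _ = C.Lam.rng g
    rw [C.ι_src, C.edge_rng n _ hv_sy, hpsrc]
  -- the two commuting-square identities
  have eq1 : C.Lam.comp e (C.ι (n+1) x) = C.Lam.comp (C.ι n (C.p n x)) f :=
    C.edge_comm n x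
  have eq2 : C.Lam.comp f (C.ι (n+1) y) = C.Lam.comp (C.ι n (C.p n y)) g := by
    have := C.edge_comm n y
    rw [hf, hg, hxy]
    exact this
  -- cocycle identities
  have A1 := h3 e (C.ι (n+1) x) (C.ι (n+1) y) hc1 hc2
  have A2 := h3 (C.ι n (C.p n x)) f (C.ι (n+1) y) hc3 hc4
  have A3 := h3 (C.ι n (C.p n x)) (C.ι n (C.p n y)) g hc5 hc6
  -- vanishing
  have v1 : c' e (C.ι (n+1) x) = 0 := hvanish _ _ (Or.inl (hOL _ hv_rx))
  have v2 : c' e (C.Lam.comp (C.ι (n+1) x) (C.ι (n+1) y)) = 0 :=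
    hvanish _ _ (Or.inl (hOL _ hv_rx))
  have v3 : c' (C.ι n (C.p n x)) f = 0 := hvanish _ _ (Or.inr (hOL _ hv_sx))
  have v4 : c' f (C.ι (n+1) y) = 0 := hvanish _ _ (Or.inl (hOL _ hv_sx))
  have v5 : c' (C.Lam.comp (C.ι n (C.p n x)) (C.ι n (C.p n y))) g = 0 :=
    hvanish _ _ (Or.inr (hOL _ hv_sy))
  have v6 : c' (C.ι n (C.p n y)) g = 0 := hvanish _ _ (Or.inr (hOL _ hv_sy))
  rw [v1, v2, zero_add, add_zero] at A1
  rw [v3, v4, zero_add, zero_add] at A2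
  rw [v5, v6, add_zero, zero_add] at A3
  rw [← A1, eq1, A2, eq2, ← A3]
end

section
/- Let Λ = lim(Λ_n, p_n) be the (k+1)-graph associated to a covering sequence of k-graphs, let A be an abelian group, and let c ∈ Z²(Λ, A). Then there exists a 1-cochain b : Λ → A such that c − δ¹b = π_*(c|_{Λ_1}). -/
open scoped BigOperators NNReal ENNReal

attribute [local instance] Classical.propDecidable

open KGraph

namespace CovSeqLimit

variable {k : ℕ} (C : CovSeqLimit k)

lemma deg_eq_zero' {d : Fin (k + 1) → ℕ} (h1 : OnlyLast d) (h2 : d (Fin.last k) = 0) :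
    d = 0 := by
  funext i
  induction i using Fin.lastCases with
  | last => exact h2
  | cast i => exact h1 i

lemma eq_of_deg_zero' {k' : ℕ} (Λ : KGraph k') (x : Λ.M) (h : Λ.deg x = 0) :
    Λ.rng x = x ∧ Λ.src x = x := by
  obtain ⟨p, hp, hup⟩ := Λ.factor x 0 0 (by rw [h]; simp)
  have h1 := hup (Λ.rng x, x) ⟨Λ.src_rng x, Λ.id_comp x, Λ.deg_rng x, h⟩
  have h2 := hup (x, Λ.src x) ⟨(Λ.rng_src x).symm, Λ.comp_id x, h, Λ.deg_src x⟩
  have h3 := h1.trans h2.symm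
  exact ⟨congrArg Prod.fst h3, (congrArg Prod.snd h3).symm⟩

lemma no_edge_from_L0 (e : C.Lam.M) (hd : C.Lam.deg e = Fin.snoc (fun _ : Fin k => 0) 1)
    (w : (C.L 0).M) (hs : C.Lam.src e = C.ι 0 w) : False := by
  obtain ⟨q, hqv, hqe⟩ := C.edge_surj e hd
  obtain ⟨n, v⟩ := q
  have h := C.edge_src n v hqv
  rw [hqe, hs] at h
  exact Nat.succ_ne_zero n (C.ι_disjoint (n + 1) 0 v w h.symm)

lemma peel (α : C.Lam.M) (hα : OnlyLast (C.Lam.deg α)) (m : ℕ)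
    (hm : C.Lam.deg α (Fin.last k) = m + 1) :
    ∃ γ e, C.Lam.Composable γ e ∧ C.Lam.comp γ e = α ∧ OnlyLast (C.Lam.deg γ) ∧
      C.Lam.deg γ (Fin.last k) = m ∧ C.Lam.deg e = Fin.snoc (fun _ : Fin k => 0) 1 ∧
      C.Lam.src e = C.Lam.src α ∧ C.Lam.rng γ = C.Lam.rng α := by
  have hdeg : C.Lam.deg α =
      (Fin.snoc (fun _ : Fin k => 0) m) + (Fin.snoc (fun _ : Fin k => 0) 1) := by
    funext i
    induction i using Fin.lastCases with
    | last => simp [Fin.snoc_last, hm]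
    | cast i => simp [Fin.snoc_castSucc, hα i]
  obtain ⟨⟨γ, e⟩, ⟨hcomp, heq, hdγ, hde⟩, -⟩ := C.Lam.factor α
      (Fin.snoc (fun _ : Fin k => 0) m) (Fin.snoc (fun _ : Fin k => 0) 1) hdeg
  refine ⟨γ, e, hcomp, heq, ?_, ?_, hde, ?_, ?_⟩
  · intro i; rw [hdγ]; simp [Fin.snoc_castSucc]
  · rw [hdγ]; simp [Fin.snoc_last]
  · rw [← heq, C.Lam.src_comp γ e hcomp]
  · rw [← heq, C.Lam.rng_comp γ e hcomp]

lemma vertical_unique : ∀ (m : ℕ) (α α' : C.Lam.M),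
    OnlyLast (C.Lam.deg α) → OnlyLast (C.Lam.deg α') →
    C.Lam.deg α (Fin.last k) = m →
    C.Lam.src α = C.Lam.src α' →
    (∃ w, C.Lam.rng α = C.ι 0 w) → (∃ w', C.Lam.rng α' = C.ι 0 w') →
    α = α' := by
  intro m
  induction m with
  | zero =>
    rintro α α' hα hα' hm hs ⟨w, hw⟩ ⟨w', hw'⟩
    have hd0 : C.Lam.deg α = 0 := deg_eq_zero' hα hm
    obtain ⟨hr, hsrc⟩ := eq_of_deg_zero' C.Lam α hd0
    have hαw : α = C.ι 0 w := by rw [← hr, hw]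
    have hs' : C.Lam.src α' = C.ι 0 w := by rw [← hs, hsrc, hαw]
    have h0' : C.Lam.deg α' (Fin.last k) = 0 := by
      by_contra hne
      obtain ⟨m', hm'⟩ : ∃ m', C.Lam.deg α' (Fin.last k) = m' + 1 :=
        ⟨C.Lam.deg α' (Fin.last k) - 1, by omega⟩
      obtain ⟨γ, e, -, -, -, -, hde, hse, -⟩ := C.peel α' hα' m' hm'
      exact C.no_edge_from_L0 e hde w (hse.trans hs')
    obtain ⟨-, hsrc'⟩ := eq_of_deg_zero' C.Lam α' (deg_eq_zero' hα' h0')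
    calc α = C.Lam.src α := hsrc.symm
      _ = C.Lam.src α' := hs
      _ = α' := hsrc'
  | succ m ih =>
    rintro α α' hα hα' hm hs ⟨w, hw⟩ ⟨w', hw'⟩
    have hne : C.Lam.deg α' (Fin.last k) ≠ 0 := by
      intro h0
      obtain ⟨hr', hsrc'⟩ := eq_of_deg_zero' C.Lam α' (deg_eq_zero' hα' h0)
      have hα'w : α' = C.ι 0 w' := by rw [← hr', hw']
      have hsw : C.Lam.src α = C.ι 0 w' := by rw [hs, hsrc', hα'w]
      obtain ⟨γ, e, -, -, -, -, hde, hse, -⟩ := C.peel α hα m hm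
      exact C.no_edge_from_L0 e hde w' (hse.trans hsw)
    obtain ⟨m'', hm''⟩ : ∃ m'', C.Lam.deg α' (Fin.last k) = m'' + 1 :=
      ⟨C.Lam.deg α' (Fin.last k) - 1, by omega⟩
    obtain ⟨γ, e, hce, heq, hγOL, hγd, hde, hse, hre⟩ := C.peel α hα m hm
    obtain ⟨γ', e', hce', heq', hγOL', hγd', hde', hse', hre'⟩ := C.peel α' hα' m'' hm''
    obtain ⟨⟨n, v⟩, hqv, hqe⟩ := C.edge_surj e hde
    obtain ⟨⟨n', v'⟩, hqv', hqe'⟩ := C.edge_surj e' hde'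
    have h1 : C.ι (n + 1) v = C.ι (n' + 1) v' := by
      rw [← C.edge_src n v hqv, ← C.edge_src n' v' hqv', hqe, hqe', hse, hse', hs]
    have hnn : n = n' := by
      have := C.ι_disjoint (n + 1) (n' + 1) v v' h1
      omega
    subst hnn
    have hvv : v = v' := C.ι_inj (n + 1) h1
    subst hvv
    have hee : e = e' := by rw [← hqe, ← hqe']
    have hγγ : γ = γ' := by
      refine ih γ γ' hγOL hγOL' hγd ?_ ⟨w, hre.trans hw⟩ ⟨w', hre'.trans hw'⟩
      rw [hce, hce', hee]
    rw [← heq, ← heq', hγγ, hee]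

lemma factor_unique {p1 p2 q1 q2 : C.Lam.M}
    (h1 : C.Lam.Composable p1 p2) (h2 : C.Lam.Composable q1 q2)
    (he : C.Lam.comp p1 p2 = C.Lam.comp q1 q2)
    (hp1 : C.Lam.deg p1 (Fin.last k) = 0) (hq1 : C.Lam.deg q1 (Fin.last k) = 0)
    (hp2 : OnlyLast (C.Lam.deg p2)) (hq2 : OnlyLast (C.Lam.deg q2)) :
    p1 = q1 ∧ p2 = q2 := by
  have hdc : C.Lam.deg (C.Lam.comp p1 p2) = C.Lam.deg p1 + C.Lam.deg p2 :=
    C.Lam.deg_comp p1 p2 h1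
  have hdc' : C.Lam.deg (C.Lam.comp q1 q2) = C.Lam.deg q1 + C.Lam.deg q2 :=
    C.Lam.deg_comp q1 q2 h2
  have htot : C.Lam.deg p1 + C.Lam.deg p2 = C.Lam.deg q1 + C.Lam.deg q2 := by
    rw [← hdc, ← hdc', he]
  have hd1 : C.Lam.deg p1 = C.Lam.deg q1 := by
    funext i
    induction i using Fin.lastCases with
    | last => rw [hp1, hq1]
    | cast i =>
      have h := congrFun htot i.castSucc
      simp only [Pi.add_apply, hp2 i, hq2 i] at h
      omega
  have hd2 : C.Lam.deg p2 = C.Lam.deg q2 := by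
    funext i
    induction i using Fin.lastCases with
    | last =>
      have h := congrFun htot (Fin.last k)
      simp only [Pi.add_apply, hp1, hq1] at h
      omega
    | cast i => rw [hp2 i, hq2 i]
  obtain ⟨p, hp, hup⟩ := C.Lam.factor (C.Lam.comp p1 p2) (C.Lam.deg p1) (C.Lam.deg p2) hdc
  have e1 := hup (p1, p2) ⟨h1, rfl, rfl, rfl⟩
  have e2 := hup (q1, q2) ⟨h2, he.symm, hd1.symm, hd2.symm⟩
  have h3 := e1.trans e2.symm
  exact ⟨congrArg Prod.fst h3, congrArg Prod.snd h3⟩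

lemma deg_ι_last (n : ℕ) (x : (C.L n).M) : C.Lam.deg (C.ι n x) (Fin.last k) = 0 := by
  rw [C.ι_deg]; simp [Fin.snoc_last]

end CovSeqLimit

open KGraph in
/-- For every `c ∈ Z²(Λ, A)` there is a `1`-cochain `b` on `Λ` with
`c − δ¹b = π_*(c|_{Λ₁})`. -/
theorem cocycle_cohomologous_to_pullback {k : ℕ} (C : CovSeqLimit k)
    (A : Type*) [AddCommGroup A]
    (c : C.Lam.M → C.Lam.M → A) (hc : c ∈ Z2 C.Lam A)
    (ξ : C.Lam.M → C.Lam.M) (hξ : C.IsXi ξ)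
    (π : C.Lam.M → (C.L 0).M) (hπ : C.IsProjOnto ξ π) :
    ∃ b : C.Lam.M → A, C.Lam.IsCochain1 b ∧
      c - C.Lam.delta1 b = C.pfwd π (C.res c) := by
  obtain ⟨hc0, hc1, hc2⟩ := hc
  choose β hβOL hβC hβE using hπ
  refine ⟨fun x => c (ξ (C.Lam.rng x)) x - c (C.ι 0 (π x)) (β x), ?_, ?_⟩
  · -- the 1-cochain property
    intro v hv
    have hξv := hξ v hv
    have hcomp : C.Lam.comp (ξ (C.Lam.rng v)) v = ξ v := by
      rw [hv]
      have h := C.Lam.comp_id (ξ v)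
      rwa [hξv.1] at h
    have hxv : ξ v = C.Lam.comp (C.ι 0 (π v)) (β v) := hcomp.symm.trans (hβE v)
    have hdeg : C.Lam.deg (ξ v) = C.Lam.deg (C.ι 0 (π v)) + C.Lam.deg (β v) := by
      rw [hxv]; exact C.Lam.deg_comp _ _ (hβC v)
    have hP0 : C.Lam.deg (C.ι 0 (π v)) = 0 := by
      funext i
      induction i using Fin.lastCases with
      | last => simpa using C.deg_ι_last 0 (π v)
      | cast i =>
        have h1 := congrFun hdeg i.castSucc
        have h2 := hξv.2.1 i
        simp only [Pi.add_apply] at h1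
        simp only [Pi.zero_apply]
        omega
    have hPvtx : C.Lam.IsVertex (C.ι 0 (π v)) := (CovSeqLimit.eq_of_deg_zero' C.Lam _ hP0).1
    have h1 : c (ξ (C.Lam.rng v)) v = 0 := hc1 _ v (Or.inr hv)
    have h2 : c (C.ι 0 (π v)) (β v) = 0 := hc1 _ _ (Or.inl hPvtx)
    simp [h1, h2]
  · -- the main identity
    funext x y
    simp only [Pi.sub_apply, KGraph.delta1, CovSeqLimit.pfwd, CovSeqLimit.res]
    split_ifs with h
    · have hrx := C.Lam.isVertex_rng x
      have hry := C.Lam.isVertex_rng y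
      obtain ⟨hXs, hXOL, wX, hwXv, hwX⟩ := hξ _ hrx
      obtain ⟨hYs, hYOL, wY, hwYv, hwY⟩ := hξ _ hry
      have hXx : C.Lam.Composable (ξ (C.Lam.rng x)) x := hXs
      have hrz : C.Lam.rng (C.Lam.comp x y) = C.Lam.rng x := C.Lam.rng_comp x y h
      have hEx := hβE x
      have hEy := hβE y
      have hEz := hβE (C.Lam.comp x y)
      rw [hrz] at hEz
      -- source and range of β x
      have hsβx : C.Lam.src (β x) = C.Lam.src x := by
        have e1 : C.Lam.src (C.Lam.comp (ξ (C.Lam.rng x)) x) = C.Lam.src x :=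
          C.Lam.src_comp _ x hXx
        have e2 : C.Lam.src (C.Lam.comp (C.ι 0 (π x)) (β x)) = C.Lam.src (β x) :=
          C.Lam.src_comp _ (β x) (hβC x)
        rw [← e1, hEx, e2]
      have hrβx : C.Lam.rng (β x) = C.ι 0 ((C.L 0).src (π x)) := by
        rw [← hβC x]
        exact C.ι_src 0 (π x)
      -- β x = ξ (rng y)
      have hβxξ : β x = ξ (C.Lam.rng y) := by
        refine C.vertical_unique (C.Lam.deg (β x) (Fin.last k)) _ _ (hβOL x) hYOL rfl
          ?_ ⟨_, hrβx⟩ ⟨_, hwY⟩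
        rw [hsβx, hYs]; exact h
      have hCβxy : C.Lam.Composable (β x) y := hsβx.trans h
      have hβxy : C.Lam.comp (β x) y = C.Lam.comp (C.ι 0 (π y)) (β y) := by
        rw [hβxξ]; exact hEy
      have hCQβy : C.Lam.Composable (C.ι 0 (π y)) (β y) := hβC y
      have hrQ : C.Lam.rng (C.ι 0 (π y)) = C.Lam.rng (β x) := by
        rw [← C.Lam.rng_comp _ (β y) hCQβy, ← hβxy, C.Lam.rng_comp (β x) y hCβxy]
      have hCPQ : C.Lam.Composable (C.ι 0 (π x)) (C.ι 0 (π y)) := (hβC x).trans hrQ.symm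
      have hbig : C.Lam.comp (C.ι 0 (π (C.Lam.comp x y))) (β (C.Lam.comp x y)) =
          C.Lam.comp (C.Lam.comp (C.ι 0 (π x)) (C.ι 0 (π y))) (β y) := by
        rw [← hEz, ← C.Lam.comp_assoc (ξ (C.Lam.rng x)) x y hXx h, hEx,
          C.Lam.comp_assoc _ (β x) y (hβC x) hCβxy, hβxy,
          ← C.Lam.comp_assoc _ _ (β y) hCPQ hCQβy]
      have hCPQβy : C.Lam.Composable (C.Lam.comp (C.ι 0 (π x)) (C.ι 0 (π y))) (β y) :=
        (C.Lam.src_comp _ _ hCPQ).trans hCQβy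
      have hdPQ : C.Lam.deg (C.Lam.comp (C.ι 0 (π x)) (C.ι 0 (π y))) (Fin.last k) = 0 := by
        rw [C.Lam.deg_comp _ _ hCPQ]
        simp [Pi.add_apply, C.deg_ι_last]
      obtain ⟨hReq, hβzeq⟩ := C.factor_unique (hβC (C.Lam.comp x y)) hCPQβy hbig
        (C.deg_ι_last 0 (π (C.Lam.comp x y))) hdPQ (hβOL (C.Lam.comp x y)) (hβOL y)
      -- the three cocycle identities
      have E1 := hc2 (ξ (C.Lam.rng x)) x y hXx h
      rw [hEx] at E1
      have E2 := hc2 (C.ι 0 (π x)) (β x) y (hβC x) hCβxy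
      rw [hβxy] at E2
      have E3 := hc2 (C.ι 0 (π x)) (C.ι 0 (π y)) (β y) hCPQ hCQβy
      -- rewrite the goal into the atoms
      rw [hrz, hReq, hβzeq, ← hβxξ]
      have e1' : c x y = c (ξ (C.Lam.rng x)) x +
          c (C.Lam.comp (C.ι 0 (π x)) (β x)) y - c (ξ (C.Lam.rng x)) (C.Lam.comp x y) :=
        eq_sub_of_add_eq E1.symm
      have e2' : c (C.Lam.comp (C.ι 0 (π x)) (β x)) y = c (β x) y +
          c (C.ι 0 (π x)) (C.Lam.comp (C.ι 0 (π y)) (β y)) - c (C.ι 0 (π x)) (β x) := by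
        refine eq_sub_of_add_eq ?_
        rw [add_comm]; exact E2
      have e3' : c (C.ι 0 (π x)) (C.ι 0 (π y)) = c (C.ι 0 (π y)) (β y) +
          c (C.ι 0 (π x)) (C.Lam.comp (C.ι 0 (π y)) (β y)) -
          c (C.Lam.comp (C.ι 0 (π x)) (C.ι 0 (π y))) (β y) :=
        eq_sub_of_add_eq E3
      rw [e1', e2', e3']
      abel
    · rw [hc0 x y h, sub_zero]
end
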